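/- Let n ≥ 1 and let X be a nonempty type of auxiliary values. Suppose p_k, p̂_k : ℝ → X → ℝ (k ∈ Fin n) are coordinate densities that are strictly positive and C² in their first argument, and h : (Fin n → ℝ) → (Fin n → ℝ) is a bijection that is C² with C² inverse such that for every x ∈ X the pushforward under h of the measure (volume on Fin n → ℝ).withDensity (s ↦ ENNReal.ofReal (∏_k p_k (s k) x)) equals (volume on Fin n → ℝ).withDensity (s ↦ ENNReal.ofReal (∏_k p̂_k (s k) x)). For s : Fin n → ℝ and x ∈ X define w(s,x) ∈ Fin (2n) → ℝ by w(s,x)_k = (first derivative of t ↦ log (p_k t x)) evaluated at s k for k < n, and w(s,x)_{n+k} = (second derivative of t ↦ log (p_k t x)) evaluated at s k for k < n. Assume that for every s there exist x₀, x₁, …, x_{2n} ∈ X such that the 2n vectors w(s,x_j) − w(s,x₀), j = 1,…,2n, are linearly independent in Fin (2n) → ℝ. Then there exist a permutation σ of Fin n and injective functions φ_k : ℝ → ℝ such that h(s) k = φ_k (s (σ k)) for every s : Fin n → ℝ and every k ∈ Fin n. -/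

import Mathlib

open MeasureTheory Function

lemma CWI_fderiv_comp_id {n : ℕ} (h g : (Fin n → ℝ) → (Fin n → ℝ))
    (hC2 : ContDiff ℝ 2 h) (hgC2 : ContDiff ℝ 2 g)
    (hgh : Function.LeftInverse g h) :
    ∀ y, (fderiv ℝ g (h y)).comp (fderiv ℝ h y) = ContinuousLinearMap.id ℝ _ := by
  intro y
  have hdg : DifferentiableAt ℝ g (h y) := (hgC2.differentiable two_ne_zero) (h y)
  have hdh : DifferentiableAt ℝ h y := (hC2.differentiable two_ne_zero) y
  have hcomp : HasFDerivAt (g ∘ h) ((fderiv ℝ g (h y)).comp (fderiv ℝ h y)) y :=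
    hdg.hasFDerivAt.comp y hdh.hasFDerivAt
  have hid : (g ∘ h) = id := funext hgh
  rw [hid] at hcomp
  exact hcomp.unique (hasFDerivAt_id y)

lemma CWI_det_mul {n : ℕ} (h g : (Fin n → ℝ) → (Fin n → ℝ))
    (hC2 : ContDiff ℝ 2 h) (hgC2 : ContDiff ℝ 2 g)
    (hgh : Function.LeftInverse g h) :
    ∀ y, (fderiv ℝ g (h y)).det * (fderiv ℝ h y).det = 1 := by
  intro y
  have := congrArg ContinuousLinearMap.det (CWI_fderiv_comp_id h g hC2 hgC2 hgh y)
  simpa [ContinuousLinearMap.det, ContinuousLinearMap.coe_comp, LinearMap.det_comp] using this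

lemma CWI_map_density {n : ℕ} (h g : (Fin n → ℝ) → (Fin n → ℝ))
    (hC2 : ContDiff ℝ 2 h) (hgC2 : ContDiff ℝ 2 g)
    (hgh : Function.LeftInverse g h) (hhg : Function.RightInverse g h)
    (F : (Fin n → ℝ) → ℝ) :
    Measure.map h ((volume : Measure (Fin n → ℝ)).withDensity fun s => ENNReal.ofReal (F s)) =
      (volume : Measure (Fin n → ℝ)).withDensity
        fun y => ENNReal.ofReal (F (g y) * |(fderiv ℝ g y).det|) := by
  have hmeas_h : Measurable h := (hC2.continuous).measurable
  have hinj : Function.Injective h := hgh.injective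
  have hsurj : Function.Surjective h := hhg.surjective
  have hdiff_h : Differentiable ℝ h := hC2.differentiable two_ne_zero
  ext t ht
  rw [Measure.map_apply hmeas_h ht, withDensity_apply _ (hmeas_h ht), withDensity_apply _ ht]
  have himg : h '' (h ⁻¹' t) = t := Set.image_preimage_eq t hsurj
  rw [← himg]
  rw [lintegral_image_eq_lintegral_abs_det_fderiv_mul (volume : Measure (Fin n → ℝ))
      (hmeas_h ht) (fun x _ => (hdiff_h x).hasFDerivAt.hasFDerivWithinAt)
      (hinj.injOn) _]
  rw [show h ⁻¹' (h '' (h ⁻¹' t)) = h ⁻¹' t from by rw [himg]]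
  apply lintegral_congr
  intro x
  rw [hgh x, ← ENNReal.ofReal_mul (abs_nonneg _)]
  congr 1
  have hd := CWI_det_mul h g hC2 hgC2 hgh x
  have habs : |(fderiv ℝ g (h x)).det| * |(fderiv ℝ h x).det| = 1 := by
    rw [← abs_mul, hd, abs_one]
  symm
  calc |(fderiv ℝ h x).det| * (F x * |(fderiv ℝ g (h x)).det|)
      = F x * (|(fderiv ℝ g (h x)).det| * |(fderiv ℝ h x).det|) := by ring
    _ = F x := by rw [habs, mul_one]

lemma CWI_density_eq {n : ℕ} (A B : (Fin n → ℝ) → ℝ) (hA : Continuous A) (hB : Continuous B)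
    (hA0 : ∀ s, 0 ≤ A s) (hB0 : ∀ s, 0 ≤ B s)
    (heq : (volume : Measure (Fin n → ℝ)).withDensity (fun s => ENNReal.ofReal (A s)) =
      (volume : Measure (Fin n → ℝ)).withDensity (fun s => ENNReal.ofReal (B s))) :
    A = B := by
  have hcA : Continuous (fun s => ENNReal.ofReal (A s)) := ENNReal.continuous_ofReal.comp hA
  have hcB : Continuous (fun s => ENNReal.ofReal (B s)) := ENNReal.continuous_ofReal.comp hB
  have hae := (withDensity_eq_iff_of_sigmaFinite hcA.measurable.aemeasurable
    hcB.measurable.aemeasurable).mp heq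
  have := (Continuous.ae_eq_iff_eq volume hcA hcB).mp hae
  funext s
  have h2 := congrFun this s
  simpa [ENNReal.ofReal_eq_ofReal_iff (hA0 s) (hB0 s)] using h2

lemma CWI_line_hasDerivAt {n : ℕ} (s₀ : Fin n → ℝ) (i : Fin n) (u : ℝ) :
    HasDerivAt (fun u' : ℝ => Function.update s₀ i u') (Pi.single i 1) u := by
  have hrepr : (fun u' : ℝ => Function.update s₀ i u') =
      fun u' : ℝ => Function.update s₀ i 0 + u' • (Pi.single i 1 : Fin n → ℝ) := by
    funext u' m
    by_cases hm : m = i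
    · subst hm; simp
    · simp [Function.update_apply, hm, Pi.single_apply]
  rw [hrepr]
  simpa using ((hasDerivAt_id u).smul_const (Pi.single i (1:ℝ) : Fin n → ℝ)).const_add
    (Function.update s₀ i 0)

lemma CWI_mixed {n : ℕ} (g : (Fin n → ℝ) → (Fin n → ℝ)) (hgC2 : ContDiff ℝ 2 g)
    (α β : Fin n → ℝ → ℝ) (hα : ∀ k, ContDiff ℝ 2 (α k)) (hβ : ∀ k, ContDiff ℝ 2 (β k))
    (hid : ∀ s, ∑ k, α k (s k) = ∑ k, β k (g s k))
    (s₀ : Fin n → ℝ) (i j : Fin n) (hij : i ≠ j) :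
    ∑ k, ((deriv (deriv (β k)) (g s₀ k) * fderiv ℝ g s₀ (Pi.single j 1) k)
        * fderiv ℝ g s₀ (Pi.single i 1) k
      + deriv (β k) (g s₀ k) *
        deriv (fun v => fderiv ℝ g (Function.update s₀ j v) (Pi.single i 1) k) (s₀ j)) = 0 := by
  have hdg : Differentiable ℝ g := hgC2.differentiable two_ne_zero
  have two_eq : (2 : WithTop ℕ∞) = 1 + 1 := by norm_num
  -- derivative of β k is C¹
  have hβ' : ∀ k, ContDiff ℝ 1 (deriv (β k)) := by
    intro k
    have hb := hβ k; rw [two_eq] at hb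
    exact (contDiff_succ_iff_deriv.mp hb).2.2
  -- the curve u ↦ update (update s₀ i u) j v and its coordinates
  have hΦu : ∀ (v u : ℝ), HasDerivAt (fun u' : ℝ => Function.update (Function.update s₀ i u') j v)
      (Pi.single i 1) u := by
    intro v u
    have : (fun u' : ℝ => Function.update (Function.update s₀ i u') j v)
        = fun u' : ℝ => Function.update (Function.update s₀ j v) i u' := by
      funext u'; rw [Function.update_comm hij]
    rw [this]; exact CWI_line_hasDerivAt _ i u
  have hΦv : ∀ (u v : ℝ), HasDerivAt (fun v' : ℝ => Function.update (Function.update s₀ i u) j v')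
      (Pi.single j 1) v := fun u v => CWI_line_hasDerivAt _ j v
  -- coordinates of g along the u-line
  have hγu : ∀ (v u : ℝ) (k : Fin n),
      HasDerivAt (fun u' => g (Function.update (Function.update s₀ i u') j v) k)
        (fderiv ℝ g (Function.update (Function.update s₀ i u) j v) (Pi.single i 1) k) u := by
    intro v u k
    have h1 : HasDerivAt (fun u' => g (Function.update (Function.update s₀ i u') j v))
        (fderiv ℝ g (Function.update (Function.update s₀ i u) j v) (Pi.single i 1)) u :=
      (hdg _).hasFDerivAt.comp_hasDerivAt u (hΦu v u)
    exact hasDerivAt_pi.mp h1 k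
  have hγv : ∀ (u v : ℝ) (k : Fin n),
      HasDerivAt (fun v' => g (Function.update (Function.update s₀ i u) j v') k)
        (fderiv ℝ g (Function.update (Function.update s₀ i u) j v) (Pi.single j 1) k) v := by
    intro u v k
    have h1 : HasDerivAt (fun v' => g (Function.update (Function.update s₀ i u) j v'))
        (fderiv ℝ g (Function.update (Function.update s₀ i u) j v) (Pi.single j 1)) v :=
      (hdg _).hasFDerivAt.comp_hasDerivAt v (hΦv u v)
    exact hasDerivAt_pi.mp h1 k
  -- Step 1: inner derivative identity
  have key1 : ∀ (v u : ℝ),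
      ∑ k, deriv (β k) (g (Function.update (Function.update s₀ i u) j v) k) *
        fderiv ℝ g (Function.update (Function.update s₀ i u) j v) (Pi.single i 1) k
      = deriv (α i) u := by
    intro v u
    have hL : HasDerivAt (fun u' => ∑ k, α k (Function.update (Function.update s₀ i u') j v k))
        (deriv (α i) u) u := by
      have hterm : ∀ k : Fin n, HasDerivAt
          (fun u' => α k (Function.update (Function.update s₀ i u') j v k))
          (if k = i then deriv (α i) u else 0) u := by
        intro k
        by_cases hk : k = i
        · rw [if_pos hk]; subst hk
          have heq : (fun u' => α k (Function.update (Function.update s₀ k u') j v k)) = α k := by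
            funext u'
            rw [Function.update_of_ne hij, Function.update_self]
          rw [heq]
          exact ((hα k).differentiable two_ne_zero u).hasDerivAt
        · have heq : (fun u' => α k (Function.update (Function.update s₀ i u') j v k))
              = fun _ => α k (Function.update (Function.update s₀ i u) j v k) := by
            funext u'
            by_cases hkj : k = j
            · subst hkj; rw [Function.update_self, Function.update_self]
            · rw [Function.update_of_ne hkj, Function.update_of_ne hk,
                Function.update_of_ne hkj, Function.update_of_ne hk]
          rw [heq, if_neg hk]
          exact hasDerivAt_const _ _
      have := HasDerivAt.fun_sum (fun k (_ : k ∈ Finset.univ) => hterm k)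
      simpa [Finset.sum_ite_eq' Finset.univ i] using this
    have hR : HasDerivAt (fun u' => ∑ k, β k (g (Function.update (Function.update s₀ i u') j v) k))
        (∑ k, deriv (β k) (g (Function.update (Function.update s₀ i u) j v) k) *
          fderiv ℝ g (Function.update (Function.update s₀ i u) j v) (Pi.single i 1) k) u := by
      refine HasDerivAt.fun_sum (fun k _ => ?_)
      exact (((hβ k).differentiable two_ne_zero) _).hasDerivAt.comp u (hγu v u k)
    have hfun : (fun u' => ∑ k, α k (Function.update (Function.update s₀ i u') j v k))
        = (fun u' => ∑ k, β k (g (Function.update (Function.update s₀ i u') j v) k)) :=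
      funext fun u' => hid _
    rw [hfun] at hL
    exact hR.unique hL
  -- Step 2: differentiate in v at s₀ j with u := s₀ i
  have hself : Function.update s₀ i (s₀ i) = s₀ := Function.update_eq_self i s₀
  have key1' : ∀ v : ℝ, ∑ k, deriv (β k) (g (Function.update s₀ j v) k) *
      fderiv ℝ g (Function.update s₀ j v) (Pi.single i 1) k = deriv (α i) (s₀ i) := by
    intro v
    have := key1 v (s₀ i)
    rwa [hself] at this
  have hγv' : ∀ (v : ℝ) (k : Fin n), HasDerivAt (fun v' => g (Function.update s₀ j v') k)
      (fderiv ℝ g (Function.update s₀ j v) (Pi.single j 1) k) v := by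
    intro v k
    have := hγv (s₀ i) v k
    rwa [hself] at this
  have hfderivC1 : ContDiff ℝ 1 (fderiv ℝ g) := hgC2.fderiv_right (by norm_num)
  have happlyC1 : ∀ k : Fin n,
      ContDiff ℝ 1 (fun z : Fin n → ℝ => fderiv ℝ g z (Pi.single i 1) k) := by
    intro k
    have h0 := (ContinuousLinearMap.apply ℝ (Fin n → ℝ) (Pi.single i (1:ℝ))).contDiff.comp
      hfderivC1
    have h1 : ContDiff ℝ 1 (fun z : Fin n → ℝ => fderiv ℝ g z (Pi.single i 1)) := by
      exact h0
    have h2 := (ContinuousLinearMap.proj (R := ℝ) (φ := fun _ : Fin n => ℝ) k).contDiff.comp h1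
    exact h2
  have hsum : HasDerivAt (fun v => ∑ k, deriv (β k) (g (Function.update s₀ j v) k) *
      fderiv ℝ g (Function.update s₀ j v) (Pi.single i 1) k)
      (∑ k, ((deriv (deriv (β k)) (g (Function.update s₀ j (s₀ j)) k) *
          fderiv ℝ g (Function.update s₀ j (s₀ j)) (Pi.single j 1) k) *
          fderiv ℝ g (Function.update s₀ j (s₀ j)) (Pi.single i 1) k
        + deriv (β k) (g (Function.update s₀ j (s₀ j)) k) *
          deriv (fun v => fderiv ℝ g (Function.update s₀ j v) (Pi.single i 1) k) (s₀ j)))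
      (s₀ j) := by
    refine HasDerivAt.fun_sum (fun k _ => ?_)
    have hf1 : HasDerivAt (fun v => deriv (β k) (g (Function.update s₀ j v) k))
        (deriv (deriv (β k)) (g (Function.update s₀ j (s₀ j)) k) *
          fderiv ℝ g (Function.update s₀ j (s₀ j)) (Pi.single j 1) k) (s₀ j) :=
      (((hβ' k).differentiable one_ne_zero) _).hasDerivAt.comp (s₀ j) (hγv' (s₀ j) k)
    have hf2d : DifferentiableAt ℝ
        (fun v => fderiv ℝ g (Function.update s₀ j v) (Pi.single i 1) k) (s₀ j) := by
      have := DifferentiableAt.comp (s₀ j)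
        (((happlyC1 k).differentiable one_ne_zero) (Function.update s₀ j (s₀ j)))
        (CWI_line_hasDerivAt s₀ j (s₀ j)).differentiableAt
      exact this
    exact hf1.mul hf2d.hasDerivAt
  have hconst : HasDerivAt (fun v : ℝ => ∑ k, deriv (β k) (g (Function.update s₀ j v) k) *
      fderiv ℝ g (Function.update s₀ j v) (Pi.single i 1) k) 0 (s₀ j) := by
    have : (fun v : ℝ => ∑ k, deriv (β k) (g (Function.update s₀ j v) k) *
        fderiv ℝ g (Function.update s₀ j v) (Pi.single i 1) k)
        = fun _ => deriv (α i) (s₀ i) := funext fun v => key1' v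
    rw [this]
    exact hasDerivAt_const _ _
  have := hsum.unique hconst
  rwa [Function.update_eq_self] at this

lemma CWI_span_zero {m : ℕ} (b : Fin m → (Fin m → ℝ)) (hm : 0 < m) (hb : LinearIndependent ℝ b)
    (V : Fin m → ℝ) (hV : ∀ j, ∑ t, b j t * V t = 0) : V = 0 := by
  classical
  haveI : Nonempty (Fin m) := ⟨⟨0, hm⟩⟩
  let f : (Fin m → ℝ) →ₗ[ℝ] ℝ :=
    { toFun := fun z => ∑ t, z t * V t
      map_add' := by intro z z'; simp [add_mul, Finset.sum_add_distrib]
      map_smul' := by intro c z; simp [Finset.mul_sum, mul_assoc] }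
  have hcard : Fintype.card (Fin m) = Module.finrank ℝ (Fin m → ℝ) := by
    simp [Module.finrank_fintype_fun_eq_card]
  let B := basisOfLinearIndependentOfCardEqFinrank hb hcard
  have hB : ⇑B = b := coe_basisOfLinearIndependentOfCardEqFinrank hb hcard
  have hf : f = 0 := by
    apply B.ext
    intro t
    rw [hB]
    exact hV t
  have hfV : f V = 0 := by rw [hf]; rfl
  have hsum : ∑ t, V t * V t = 0 := hfV
  funext t
  have hnn : ∀ t' ∈ Finset.univ, 0 ≤ V t' * V t' := fun t' _ => mul_self_nonneg _
  have := (Finset.sum_eq_zero_iff_of_nonneg hnn).mp hsum t (Finset.mem_univ t)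
  exact mul_self_eq_zero.mp this

lemma CWI_decomp {n : ℕ} (T : (Fin n → ℝ) →L[ℝ] (Fin n → ℝ)) (v : Fin n → ℝ) (k : Fin n) :
    T v k = ∑ j, v j * T (Pi.single j 1) k := by
  have hv : v = ∑ j, v j • (Pi.single j (1:ℝ) : Fin n → ℝ) := by
    funext m
    simp [Pi.single_apply]
  conv_lhs => rw [hv]
  rw [map_sum]
  simp [Finset.sum_apply]

lemma CWI_structure {n : ℕ} (g : (Fin n → ℝ) → (Fin n → ℝ)) (hgC2 : ContDiff ℝ 2 g)
    (hsurjD : ∀ s, Function.Surjective (fderiv ℝ g s))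
    (hrow : ∀ (s : Fin n → ℝ) (i j : Fin n), i ≠ j → ∀ k,
      fderiv ℝ g s (Pi.single i 1) k * fderiv ℝ g s (Pi.single j 1) k = 0) :
    ∃ σ : Fin n → Fin n, Function.Bijective σ ∧
      ∀ (s s' : Fin n → ℝ) (k : Fin n), s (σ k) = s' (σ k) → g s k = g s' k := by
  classical
  have hdg : Differentiable ℝ g := hgC2.differentiable two_ne_zero
  -- each row of the Jacobian is nonzero somewhere
  have hrownz : ∀ (s : Fin n → ℝ) (k : Fin n), ∃ j, fderiv ℝ g s (Pi.single j 1) k ≠ 0 := by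
    intro s k
    by_contra hall
    push_neg at hall
    obtain ⟨v, hv⟩ := hsurjD s (Pi.single k 1)
    have : fderiv ℝ g s v k = ∑ j, v j * fderiv ℝ g s (Pi.single j 1) k := CWI_decomp _ _ _
    rw [hv] at this
    simp [hall] at this
  -- pointwise column selector
  let σp : (Fin n → ℝ) → Fin n → Fin n := fun s k => Classical.choose (hrownz s k)
  have hσp : ∀ s k, fderiv ℝ g s (Pi.single (σp s k) 1) k ≠ 0 :=
    fun s k => Classical.choose_spec (hrownz s k)
  have huniq : ∀ s k j, fderiv ℝ g s (Pi.single j 1) k ≠ 0 → j = σp s k := by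
    intro s k j hj
    by_contra hne
    have := hrow s j (σp s k) hne k
    rcases mul_eq_zero.mp this with h1 | h1
    · exact hj h1
    · exact hσp s k h1
  have hzero : ∀ s k j, j ≠ σp s k → fderiv ℝ g s (Pi.single j 1) k = 0 := by
    intro s k j hj
    by_contra hne
    exact hj (huniq s k j hne)
  -- row sums collapse to single term
  have hcollapse : ∀ (s : Fin n → ℝ) (v : Fin n → ℝ) (k : Fin n),
      fderiv ℝ g s v k = v (σp s k) * fderiv ℝ g s (Pi.single (σp s k) 1) k := by
    intro s v k
    rw [CWI_decomp]
    exact Finset.sum_eq_single _ (fun j _ hj => by rw [hzero s k j hj, mul_zero])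
      (fun hmem => absurd (Finset.mem_univ _) hmem)
  -- σp s is injective for each s
  have hσpinj : ∀ s, Function.Injective (σp s) := by
    intro s k₁ k₂ hkk
    by_contra hne
    obtain ⟨v, hv⟩ := hsurjD s (Pi.single k₁ 1)
    have h1 : fderiv ℝ g s v k₁ = 1 := by rw [hv]; simp
    have h2 : fderiv ℝ g s v k₂ = 0 := by rw [hv]; simp [Ne.symm hne]
    rw [hcollapse] at h1 h2
    rw [← hkk] at h2
    rcases mul_eq_zero.mp h2 with h3 | h3
    · rw [h3, zero_mul] at h1; exact one_ne_zero h1.symm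
    · rw [hkk] at h3; exact hσp s k₂ h3
  -- σp is locally constant in s, hence constant
  have hMcont : ∀ (j k : Fin n), Continuous (fun s => fderiv ℝ g s (Pi.single j 1) k) := by
    intro j k
    have h1 : Continuous (fderiv ℝ g) := hgC2.continuous_fderiv two_ne_zero
    have h2 : Continuous (fun T : (Fin n → ℝ) →L[ℝ] (Fin n → ℝ) => T (Pi.single j 1)) := by
      exact (ContinuousLinearMap.apply ℝ (Fin n → ℝ) ((Pi.single j (1:ℝ)) : Fin n → ℝ)).continuous
    exact (continuous_apply k).comp (h2.comp h1)
  have hconst : ∀ (k : Fin n) (s : Fin n → ℝ), σp s k = σp 0 k := by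
    intro k
    have hlc : IsLocallyConstant (fun s => σp s k) := by
      rw [IsLocallyConstant.iff_eventually_eq]
      intro s₀
      have hcont : ContinuousAt (fun s => fderiv ℝ g s (Pi.single (σp s₀ k) 1) k) s₀ :=
        (hMcont (σp s₀ k) k).continuousAt
      have hev : ∀ᶠ s in nhds s₀, fderiv ℝ g s (Pi.single (σp s₀ k) 1) k ≠ 0 :=
        hcont.eventually_ne (hσp s₀ k)
      filter_upwards [hev] with s hs
      exact (huniq s k _ hs).symm
    intro s
    exact hlc.apply_eq_of_preconnectedSpace s 0
  refine ⟨σp 0, Finite.injective_iff_bijective.mp (hσpinj 0), ?_⟩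
  intro s s' k hcoord
  -- line segment argument
  set d : Fin n → ℝ := s' - s with hd
  have hline : ∀ t : ℝ, HasDerivAt (fun t' : ℝ => s + t' • d) d t := by
    intro t
    simpa using ((hasDerivAt_id t).smul_const d).const_add s
  have hφ : ∀ t : ℝ, HasDerivAt (fun t' : ℝ => g (s + t' • d) k) 0 t := by
    intro t
    have h1 : HasDerivAt (fun t' : ℝ => g (s + t' • d)) (fderiv ℝ g (s + t • d) d) t :=
      (hdg _).hasFDerivAt.comp_hasDerivAt t (hline t)
    have h2 := hasDerivAt_pi.mp h1 k
    have h3 : fderiv ℝ g (s + t • d) d k = 0 := by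
      rw [hcollapse, hconst k]
      have : d (σp 0 k) = 0 := by
        simp [hd, hcoord]
      rw [this, zero_mul]
    rwa [h3] at h2
  have hdiff : Differentiable ℝ (fun t' : ℝ => g (s + t' • d) k) :=
    fun t => (hφ t).differentiableAt
  have hderiv0 : ∀ t : ℝ, deriv (fun t' : ℝ => g (s + t' • d) k) t = 0 :=
    fun t => (hφ t).deriv
  have := is_const_of_deriv_eq_zero hdiff hderiv0 0 1
  simpa [hd] using this

lemma CWI_sum_split {n : ℕ} (F : Fin (2*n) → ℝ) :
    ∑ t, F t = ∑ k : Fin n, F ⟨k.val, by omega⟩ + ∑ k : Fin n, F ⟨n + k.val, Nat.lt_of_lt_of_le (Nat.add_lt_add_left k.isLt n) (Nat.le_of_eq (two_mul n).symm)⟩ := by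
  let e : Fin n ⊕ Fin n ≃ Fin (2*n) := finSumFinEquiv.trans (finCongr (two_mul n).symm)
  rw [← Equiv.sum_comp e F, Fintype.sum_sum_type]
  congr 1
theorem componentwise_identifiability
    (n : ℕ) (hn : 1 ≤ n)
    (X : Type*) [Nonempty X]
    (p p' : Fin n → ℝ → X → ℝ)
    (hp_pos : ∀ (k : Fin n) (t : ℝ) (x : X), 0 < p k t x)
    (hp'_pos : ∀ (k : Fin n) (t : ℝ) (x : X), 0 < p' k t x)
    (hp_smooth : ∀ (k : Fin n) (x : X), ContDiff ℝ 2 (fun t => p k t x))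
    (hp'_smooth : ∀ (k : Fin n) (x : X), ContDiff ℝ 2 (fun t => p' k t x))
    (h : (Fin n → ℝ) → (Fin n → ℝ))
    (hbij : Function.Bijective h)
    (hC2 : ContDiff ℝ 2 h)
    (g : (Fin n → ℝ) → (Fin n → ℝ))
    (hg : Function.LeftInverse g h ∧ Function.RightInverse g h)
    (hgC2 : ContDiff ℝ 2 g)
    (hmatch : ∀ x : X,
      Measure.map h
          ((volume : Measure (Fin n → ℝ)).withDensity
            fun s => ENNReal.ofReal (∏ k : Fin n, p k (s k) x)) =
        (volume : Measure (Fin n → ℝ)).withDensity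
          fun s => ENNReal.ofReal (∏ k : Fin n, p' k (s k) x))
    (w : (Fin n → ℝ) → X → Fin (2 * n) → ℝ)
    (hw1 : ∀ (s : Fin n → ℝ) (x : X) (k : Fin n),
      w s x ⟨k.val, by omega⟩ =
        deriv (fun t => Real.log (p k t x)) (s k))
    (hw2 : ∀ (s : Fin n → ℝ) (x : X) (k : Fin n),
      w s x ⟨n + k.val, by omega⟩ =
        deriv (deriv (fun t => Real.log (p k t x))) (s k))
    (hA3 : ∀ s : Fin n → ℝ, ∃ x : Fin (2 * n + 1) → X,
      LinearIndependent ℝ (fun j : Fin (2 * n) => w s (x j.succ) - w s (x 0))) :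
    ∃ (σ : Equiv.Perm (Fin n)) (φ : Fin n → ℝ → ℝ),
      (∀ k : Fin n, Function.Injective (φ k)) ∧
      ∀ (s : Fin n → ℝ) (k : Fin n), h s k = φ k (s (σ k)) := by
  classical
  obtain ⟨hLI, hRI⟩ := hg
  have hginj : Function.Injective g := hRI.injective
  have hgsurj : Function.Surjective g := fun y => ⟨h y, hLI y⟩
  -- determinant of the Jacobian of g never vanishes
  have hdet1 : ∀ y, (fderiv ℝ g (h y)).det * (fderiv ℝ h y).det = 1 :=
    CWI_det_mul h g hC2 hgC2 hLI
  have hdetg : ∀ s, (fderiv ℝ g s).det ≠ 0 := by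
    intro s
    have hcc := hdet1 (g s)
    rw [hRI s] at hcc
    exact left_ne_zero_of_mul_eq_one hcc
  -- pointwise change-of-variables identity for the densities
  have keyP : ∀ (x : X) (s : Fin n → ℝ),
      (∏ k, p k (g s k) x) * |(fderiv ℝ g s).det| = ∏ k, p' k (s k) x := by
    intro x
    have hmap := CWI_map_density h g hC2 hgC2 hLI hRI (fun s => ∏ k, p k (s k) x)
    have heqm : (volume : Measure (Fin n → ℝ)).withDensity
          (fun y => ENNReal.ofReal ((∏ k, p k (g y k) x) * |(fderiv ℝ g y).det|)) =
        (volume : Measure (Fin n → ℝ)).withDensity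
          (fun s => ENNReal.ofReal (∏ k, p' k (s k) x)) := by
      rw [← hmap]; exact hmatch x
    have hA : Continuous (fun y : Fin n → ℝ =>
        (∏ k, p k (g y k) x) * |(fderiv ℝ g y).det|) := by
      apply Continuous.mul
      · apply continuous_finset_prod
        intro k _
        exact (hp_smooth k x).continuous.comp ((continuous_apply k).comp hgC2.continuous)
      · exact (ContinuousLinearMap.continuous_det.comp (hgC2.continuous_fderiv two_ne_zero)).abs
    have hB : Continuous (fun s : Fin n → ℝ => ∏ k, p' k (s k) x) := by
      apply continuous_finset_prod
      intro k _
      exact (hp'_smooth k x).continuous.comp (continuous_apply k)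
    have heverywhere := CWI_density_eq _ _ hA hB
      (fun s => mul_nonneg (Finset.prod_nonneg fun k _ => (hp_pos k _ x).le) (abs_nonneg _))
      (fun s => Finset.prod_nonneg fun k _ => (hp'_pos k _ x).le) heqm
    exact fun s => congrFun heverywhere s
  -- logarithmic identity
  have keyL : ∀ (x : X) (s : Fin n → ℝ),
      (∑ k, Real.log (p k (g s k) x)) + Real.log |(fderiv ℝ g s).det|
        = ∑ k, Real.log (p' k (s k) x) := by
    intro x s
    have hprodpos : (0:ℝ) < ∏ k, p k (g s k) x := Finset.prod_pos fun k _ => hp_pos k _ x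
    have habs : |(fderiv ℝ g s).det| ≠ 0 := abs_ne_zero.mpr (hdetg s)
    have hlog := congrArg Real.log (keyP x s)
    rw [Real.log_mul (ne_of_gt hprodpos) habs,
      Real.log_prod (fun k _ => (hp_pos k _ x).ne'),
      Real.log_prod (fun k _ => (hp'_pos k _ x).ne')] at hlog
    exact hlog
  -- difference identity (the determinant cancels)
  have keyD : ∀ (x y : X) (s : Fin n → ℝ),
      ∑ k, (Real.log (p' k (s k) x) - Real.log (p' k (s k) y))
        = ∑ k, (Real.log (p k (g s k) x) - Real.log (p k (g s k) y)) := by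
    intro x y s
    have h1 := keyL x s
    have h2 := keyL y s
    rw [Finset.sum_sub_distrib, Finset.sum_sub_distrib]
    linarith
  -- smoothness of log-densities
  have hq : ∀ (k : Fin n) (x : X), ContDiff ℝ 2 (fun t => Real.log (p k t x)) :=
    fun k x => (hp_smooth k x).log (fun t => (hp_pos k t x).ne')
  have hq' : ∀ (k : Fin n) (x : X), ContDiff ℝ 2 (fun t => Real.log (p' k t x)) :=
    fun k x => (hp'_smooth k x).log (fun t => (hp'_pos k t x).ne')
  have hqd : ∀ (k : Fin n) (x : X), Differentiable ℝ (fun t => Real.log (p k t x)) :=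
    fun k x => (hq k x).differentiable two_ne_zero
  have hqdd : ∀ (k : Fin n) (x : X),
      Differentiable ℝ (deriv (fun t => Real.log (p k t x))) := by
    intro k x
    have h2 : (2 : WithTop ℕ∞) = 1 + 1 := by norm_num
    have hc := hq k x; rw [h2] at hc
    exact ((contDiff_succ_iff_deriv.mp hc).2.2).differentiable one_ne_zero
  -- products of distinct Jacobian entries in the same row vanish
  have hrow : ∀ (s₀ : Fin n → ℝ) (i j : Fin n), i ≠ j → ∀ k,
      fderiv ℝ g s₀ (Pi.single i 1) k * fderiv ℝ g s₀ (Pi.single j 1) k = 0 := by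
    intro s₀ i j hij k₀
    obtain ⟨XX, hXX⟩ := hA3 (g s₀)
    set c : Fin n → ℝ := fun k =>
      deriv (fun v => fderiv ℝ g (Function.update s₀ j v) (Pi.single i 1) k) (s₀ j) with hc
    set V : Fin (2*n) → ℝ := fun t =>
      if ht : (t : ℕ) < n then c ⟨t, ht⟩
      else fderiv ℝ g s₀ (Pi.single j 1) ⟨(t:ℕ) - n, by have := t.isLt; omega⟩ *
        fderiv ℝ g s₀ (Pi.single i 1) ⟨(t:ℕ) - n, by have := t.isLt; omega⟩ with hV
    have hpair : ∀ x y : X, ∑ t, (w (g s₀) x - w (g s₀) y) t * V t = 0 := by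
      intro x y
      have hβ1 : ∀ k : Fin n,
          deriv (fun t => Real.log (p k t x) - Real.log (p k t y)) (g s₀ k)
            = w (g s₀) x ⟨k.val, by omega⟩ - w (g s₀) y ⟨k.val, by omega⟩ := by
        intro k
        rw [hw1, hw1]
        exact deriv_sub (hqd k x (g s₀ k)) (hqd k y (g s₀ k))
      have hβ2 : ∀ k : Fin n,
          deriv (deriv (fun t => Real.log (p k t x) - Real.log (p k t y))) (g s₀ k)
            = w (g s₀) x ⟨n + k.val, by omega⟩ - w (g s₀) y ⟨n + k.val, by omega⟩ := by
        intro k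
        have hfun : deriv (fun t => Real.log (p k t x) - Real.log (p k t y))
            = fun t => deriv (fun t' => Real.log (p k t' x)) t
              - deriv (fun t' => Real.log (p k t' y)) t :=
          funext fun t => deriv_sub (hqd k x t) (hqd k y t)
        rw [hfun, hw2, hw2]
        exact deriv_sub (hqdd k x (g s₀ k)) (hqdd k y (g s₀ k))
      have hmix := CWI_mixed g hgC2
        (fun k t => Real.log (p' k t x) - Real.log (p' k t y))
        (fun k t => Real.log (p k t x) - Real.log (p k t y))
        (fun k => (hq' k x).sub (hq' k y)) (fun k => (hq k x).sub (hq k y))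
        (fun s => keyD x y s) s₀ i j hij
      rw [CWI_sum_split (fun t => (w (g s₀) x - w (g s₀) y) t * V t)]
      have htrans : (∑ k : Fin n,
            (w (g s₀) x - w (g s₀) y) (⟨k.val, by omega⟩ : Fin (2*n)) *
              V ⟨k.val, by omega⟩)
          + ∑ k : Fin n,
            (w (g s₀) x - w (g s₀) y) (⟨n + k.val, by omega⟩ : Fin (2*n)) *
              V ⟨n + k.val, by omega⟩
          = ∑ k : Fin n,
            ((deriv (deriv (fun t => Real.log (p k t x) - Real.log (p k t y))) (g s₀ k) *
              fderiv ℝ g s₀ (Pi.single j 1) k) * fderiv ℝ g s₀ (Pi.single i 1) k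
            + deriv (fun t => Real.log (p k t x) - Real.log (p k t y)) (g s₀ k) *
              deriv (fun v => fderiv ℝ g (Function.update s₀ j v) (Pi.single i 1) k) (s₀ j)) := by
        rw [← Finset.sum_add_distrib]
        apply Finset.sum_congr rfl
        intro k _
        have hV1 : V (⟨k.val, by omega⟩ : Fin (2*n)) = c k := by
          simp only [hV]
          rw [dif_pos (show ((⟨k.val, by omega⟩ : Fin (2*n)) : ℕ) < n from k.isLt)]
        have hV2 : V (⟨n + k.val, by omega⟩ : Fin (2*n)) =
            fderiv ℝ g s₀ (Pi.single j 1) k * fderiv ℝ g s₀ (Pi.single i 1) k := by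
          simp only [hV]
          rw [dif_neg (by simp)]
          simp
        rw [hV1, hV2, Pi.sub_apply, Pi.sub_apply, ← hβ1 k, ← hβ2 k]
        ring
      rw [htrans]
      exact hmix
    have hVzero := CWI_span_zero
      (fun j' : Fin (2*n) => w (g s₀) (XX j'.succ) - w (g s₀) (XX 0)) (by omega) hXX V
      (fun j' => hpair (XX j'.succ) (XX 0))
    have hgoal : fderiv ℝ g s₀ (Pi.single i 1) k₀ * fderiv ℝ g s₀ (Pi.single j 1) k₀
        = V (⟨n + k₀.val, by omega⟩ : Fin (2*n)) := by
      simp only [hV]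
      rw [dif_neg (by simp)]
      rw [mul_comm]
      simp
    rw [hgoal, hVzero]
    simp
  -- surjectivity of the Jacobian of g
  have hsurjD : ∀ s, Function.Surjective (fderiv ℝ g s) := by
    intro s z
    have hcomp := CWI_fderiv_comp_id h g hC2 hgC2 hLI (g s)
    rw [hRI s] at hcomp
    refine ⟨fderiv ℝ h (g s) z, ?_⟩
    have happ := congrArg (fun T : (Fin n → ℝ) →L[ℝ] (Fin n → ℝ) => T z) hcomp
    simpa using happ
  obtain ⟨σ, hσbij, hdep⟩ := CWI_structure g hgC2 hsurjD hrow
  -- componentwise maps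
  set ψ : Fin n → ℝ → ℝ := fun k t => g (fun _ => t) k with hψdef
  have hψ : ∀ (s : Fin n → ℝ) (k : Fin n), g s k = ψ k (s (σ k)) :=
    fun s k => hdep s (fun _ => s (σ k)) k rfl
  have hψsurj : ∀ k, Function.Surjective (ψ k) := by
    intro k y
    obtain ⟨s, hs⟩ := hgsurj (Pi.single k y)
    refine ⟨s (σ k), ?_⟩
    rw [← hψ s k, hs]
    simp
  have hψinj : ∀ k, Function.Injective (ψ k) := by
    intro k a b hab
    have hgs : g (Function.update (0 : Fin n → ℝ) (σ k) a)
        = g (Function.update (0 : Fin n → ℝ) (σ k) b) := by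
      funext m
      rw [hψ _ m, hψ _ m]
      by_cases hm : m = k
      · subst hm
        rw [Function.update_self, Function.update_self]
        exact hab
      · have hne : σ m ≠ σ k := fun hcon => hm (hσbij.1 hcon)
        rw [Function.update_of_ne hne, Function.update_of_ne hne]
    have hupd := hginj hgs
    have := congrFun hupd (σ k)
    simpa using this
  let E : Equiv.Perm (Fin n) := Equiv.ofBijective σ hσbij
  let Ψ : Fin n → ℝ ≃ ℝ := fun k => Equiv.ofBijective (ψ k) ⟨hψinj k, hψsurj k⟩
  refine ⟨E.symm, fun m => ⇑(Ψ (E.symm m)).symm,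
    fun m => (Ψ (E.symm m)).symm.injective, ?_⟩
  intro s m
  have hσk : σ (E.symm m) = m := E.apply_symm_apply m
  have h1 : ψ (E.symm m) (h s (σ (E.symm m))) = s (E.symm m) := by
    have hghs := congrFun (hLI s) (E.symm m)
    rw [hψ (h s) (E.symm m)] at hghs
    exact hghs
  rw [hσk] at h1
  have h2 : (Ψ (E.symm m)) (h s m) = s (E.symm m) := h1
  rw [← h2]
  exact (Equiv.symm_apply_apply (Ψ (E.symm m)) (h s m)).symm
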